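/- Let w ∈ Sₙ and let h and h' be two overlapping contiguous subwords of w, each of length c, each of which forms a permutation of Sc (i.e., each consists of c consecutive values). If h is right leaning (respectively, left leaning), then h' is also right leaning (respectively, left leaning), and neither h nor h' is omni leaning. -/

import Mathlib

/-- A word with distinct letters is right leaning if for some `k` less than its
length, the first `k` letters are the `k` smallest values. -/
def RightLeaningW (v : List ℕ) : Prop :=
  ∃ k : ℕ, 1 ≤ k ∧ k < v.length ∧ ∀ x ∈ v.take k, ∀ y ∈ v.drop k, x < y

/-- A word is left leaning if its reversal is right leaning. -/
def LeftLeaningW (v : List ℕ) : Prop := RightLeaningW v.reverse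

lemma not_both {v : List ℕ} (hr : RightLeaningW v) (hl : LeftLeaningW v) : False := by
  obtain ⟨k, hk1, hk2, hk⟩ := hr
  obtain ⟨j, hj1, hj2, hj⟩ := hl
  rw [List.length_reverse] at hj2
  have h0 : 0 < v.length := by omega
  have ha : v[0] ∈ v.take k := by
    have h' : 0 < (v.take k).length := by simp [List.length_take]; omega
    have := List.getElem_mem h'
    simpa [List.getElem_take] using this
  have hb : v[v.length - 1] ∈ v.drop k := by
    have h' : v.length - 1 - k < (v.drop k).length := by simp [List.length_drop]; omega
    have := List.getElem_mem h'
    rw [List.getElem_drop] at this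
    simpa [show k + (v.length - 1 - k) = v.length - 1 by omega] using this
  have hab : v[0] < v[v.length - 1] := hk _ ha _ hb
  have ha' : v[v.length - 1] ∈ v.reverse.take j := by
    have h' : 0 < (v.reverse.take j).length := by simp [List.length_take]; omega
    have := List.getElem_mem h'
    rw [List.getElem_take, List.getElem_reverse] at this
    simpa using this
  have hb' : v[0] ∈ v.reverse.drop j := by
    have h' : v.length - 1 - j < (v.reverse.drop j).length := by
      simp [List.length_drop]; omega
    have := List.getElem_mem h'
    rw [List.getElem_drop, List.getElem_reverse] at this
    simpa [show v.length - 1 - (j + (v.length - 1 - j)) = 0 by omega] using this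
  have hba : v[v.length - 1] < v[0] := hj _ ha' _ hb'
  omega

lemma left_of (v : List ℕ) (k : ℕ) (h1 : 1 ≤ k) (h2 : k < v.length)
    (h : ∀ x ∈ v.take k, ∀ y ∈ v.drop k, y < x) : LeftLeaningW v := by
  refine ⟨v.length - k, by omega, by rw [List.length_reverse]; omega, ?_⟩
  have hv : v.reverse = (v.drop k).reverse ++ (v.take k).reverse := by
    rw [← List.reverse_append, List.take_append_drop]
  have hlen : (v.drop k).reverse.length = v.length - k := by
    simp [List.length_drop]
  intro x hx y hy
  rw [hv, List.take_left' hlen] at hx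
  rw [hv, List.drop_left' hlen] at hy
  rw [List.mem_reverse] at hx hy
  exact h _ hy _ hx

lemma key (n c : ℕ) (hc : 2 ≤ c) (w : List ℕ) (hw : w.Perm (List.range' 1 n))
    (i i' m m' : ℕ) (hii : i < i') (hin : i' + c ≤ n) (hov : i' < i + c)
    (hhit : ((w.drop i).take c).Perm (List.range' m c))
    (hhit' : ((w.drop i').take c).Perm (List.range' m' c)) :
    (RightLeaningW ((w.drop i).take c) ∧ RightLeaningW ((w.drop i').take c)) ∨
    (LeftLeaningW ((w.drop i).take c) ∧ LeftLeaningW ((w.drop i').take c)) := by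
  set H := (w.drop i).take c with hH
  set H' := (w.drop i').take c with hH'
  set d := i' - i with hd
  have hd1 : 1 ≤ d := by omega
  have hd2 : d < c := by omega
  have hwlen : w.length = n := by
    have := hw.length_eq; simpa using this
  have hnodup : w.Nodup := hw.nodup_iff.mpr (List.nodup_range' (s := 1) (n := n))
  have memH : ∀ x, x ∈ H ↔ m ≤ x ∧ x < m + c := fun x => by
    rw [hhit.mem_iff, List.mem_range'_1]
  have memH' : ∀ x, x ∈ H' ↔ m' ≤ x ∧ x < m' + c := fun x => by
    rw [hhit'.mem_iff, List.mem_range'_1]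
  have split : ∀ j : ℕ, ∀ x ∈ w.take j, x ∉ w.drop j := by
    intro j
    have h := hnodup
    rw [← List.take_append_drop j w, List.nodup_append] at h
    exact fun x hx hx' => h.2.2 x hx x hx' rfl
  have Hlen : H.length = c := by
    simp only [hH, List.length_take, List.length_drop]; omega
  have H'len : H'.length = c := by
    simp only [hH', List.length_take, List.length_drop]; omega
  -- P = H.take d, values only in H
  have hPtake : H.take d = (w.drop i).take d := by
    rw [hH, List.take_take, min_eq_left (le_of_lt hd2)]
  have hPsub : ∀ x ∈ H.take d, x ∈ w.take i' := by
    intro x hx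
    rw [hPtake] at hx
    have : w.take i' = w.take i ++ (w.drop i).take d := by
      rw [← List.take_add]; congr 1; omega
    rw [this, List.mem_append]; exact Or.inr hx
  have hPnotH' : ∀ x ∈ H.take d, x ∉ H' := fun x hx hx' =>
    split i' x (hPsub x hx) (List.take_subset _ _ hx')
  -- O : H.drop d = H'.take (c - d)
  have hOeq : H.drop d = H'.take (c - d) := by
    have h1 : i + d = i' := by omega
    rw [hH, hH', List.drop_take, List.drop_drop, h1, List.take_take,
      min_eq_left (by omega : c - d ≤ c)]
  have hOH' : ∀ x ∈ H.drop d, x ∈ H' := by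
    intro x hx; rw [hOeq] at hx; exact List.take_subset _ _ hx
  have hOH : ∀ x ∈ H'.take (c - d), x ∈ H := by
    intro x hx; rw [← hOeq] at hx; exact List.drop_subset _ _ hx
  -- S = H'.drop (c - d), values only in H'
  have hSsub : ∀ x ∈ H'.drop (c - d), x ∈ w.drop (i + c) := by
    intro x hx
    rw [hH', List.drop_take, List.drop_drop] at hx
    have : i' + (c - d) = i + c := by omega
    rw [this] at hx
    exact List.take_subset _ _ hx
  have hHsub : ∀ x ∈ H, x ∈ w.take (i + c) := by
    intro x hx
    rw [List.take_add, List.mem_append]; exact Or.inr hx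
  have hSnotH : ∀ x ∈ H'.drop (c - d), x ∉ H := fun x hx hxH =>
    split (i + c) x (hHsub x hxH) (hSsub x hx)
  -- m ≠ m'
  have hPne : H.take d ≠ [] := by
    rw [← List.length_pos_iff_ne_nil, List.length_take, Hlen]; omega
  have hmm : m ≠ m' := by
    intro h
    obtain ⟨p, hp⟩ := List.exists_mem_of_ne_nil _ hPne
    have h1 := (memH p).mp (List.take_subset _ _ hp)
    exact hPnotH' p hp ((memH' p).mpr (by omega))
  rcases Ne.lt_or_gt hmm with hlt | hlt
  · -- m < m' : both right leaning
    left
    constructor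
    · refine ⟨d, hd1, by rw [Hlen]; exact hd2, ?_⟩
      intro x hx y hy
      have hx1 := (memH x).mp (List.take_subset _ _ hx)
      have hx2 : ¬(m' ≤ x ∧ x < m' + c) := fun h => hPnotH' x hx ((memH' x).mpr h)
      have hy1 := (memH' y).mp (hOH' y hy)
      omega
    · refine ⟨c - d, by omega, by rw [H'len]; omega, ?_⟩
      intro x hx y hy
      have hx1 := (memH x).mp (hOH x hx)
      have hy1 := (memH' y).mp (List.drop_subset _ _ hy)
      have hy2 : ¬(m ≤ y ∧ y < m + c) := fun h => hSnotH y hy ((memH y).mpr h)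
      omega
  · -- m' < m : both left leaning
    right
    constructor
    · refine left_of _ d hd1 (by rw [Hlen]; exact hd2) ?_
      intro x hx y hy
      have hx1 := (memH x).mp (List.take_subset _ _ hx)
      have hx2 : ¬(m' ≤ x ∧ x < m' + c) := fun h => hPnotH' x hx ((memH' x).mpr h)
      have hy1 := (memH' y).mp (hOH' y hy)
      omega
    · refine left_of _ (c - d) (by omega) (by rw [H'len]; omega) ?_
      intro x hx y hy
      have hx1 := (memH x).mp (hOH x hx)
      have hy1 := (memH' y).mp (List.drop_subset _ _ hy)
      have hy2 : ¬(m ≤ y ∧ y < m + c) := fun h => hSnotH y hy ((memH y).mpr h)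
      omega

lemma combine {A B : List ℕ}
    (h : (RightLeaningW A ∧ RightLeaningW B) ∨ (LeftLeaningW A ∧ LeftLeaningW B)) :
    (RightLeaningW A → RightLeaningW B) ∧
    (LeftLeaningW A → LeftLeaningW B) ∧
    (RightLeaningW A ∨ LeftLeaningW A) ∧
    (RightLeaningW B ∨ LeftLeaningW B) := by
  rcases h with ⟨hA, hB⟩ | ⟨hA, hB⟩
  · exact ⟨fun _ => hB, fun hL => (not_both hA hL).elim, Or.inl hA, Or.inl hB⟩
  · exact ⟨fun hR => (not_both hR hA).elim, fun _ => hB, Or.inr hA, Or.inr hB⟩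

/-- Two distinct overlapping hits of size `c` in a permutation `w ∈ Sₙ` are both
forward: if one is right (resp. left) leaning so is the other, and neither is
omni leaning. -/
theorem stmt6 (n c : ℕ) (hc : 2 ≤ c) (hcn : c ≤ n)
    (w : List ℕ) (hw : w.Perm (List.range' 1 n))
    (i i' : ℕ) (hi : i + c ≤ n) (hi' : i' + c ≤ n) (hne : i ≠ i')
    (hov : i' < i + c ∧ i < i' + c)
    (m m' : ℕ)
    (hhit : ((w.drop i).take c).Perm (List.range' m c))
    (hhit' : ((w.drop i').take c).Perm (List.range' m' c)) :
    (RightLeaningW ((w.drop i).take c) → RightLeaningW ((w.drop i').take c)) ∧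
    (LeftLeaningW ((w.drop i).take c) → LeftLeaningW ((w.drop i').take c)) ∧
    (RightLeaningW ((w.drop i).take c) ∨ LeftLeaningW ((w.drop i).take c)) ∧
    (RightLeaningW ((w.drop i').take c) ∨ LeftLeaningW ((w.drop i').take c)) := by
  rcases lt_or_gt_of_ne hne with h | h
  · exact combine (key n c hc w hw i i' m m' h hi' hov.1 hhit hhit')
  · exact combine ((key n c hc w hw i' i m' m h hi hov.2 hhit' hhit).imp And.symm And.symm)
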